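/- Let Λ=(v(ab)^ω, σ(Rϑ)^ω) be a directive bi-sequence of a ternary generalized pseudostandard word u over {0,1,2}, where v is a finite word over {0,1,2}, σ a finite sequence of antimorphisms from {E₀,E₁,E₂,R} with |v|=|σ|=n₀, ϑ∈{E₀,E₁,E₂} and a,b∈{0,1,2} satisfy ϑ(a)=b. Write w_{n₀+1}=ps, where asb is the longest ϑ-palindromic suffix of the word w_{n₀+1}b. Then for every k≥1: w_{n₀+2k-1}=ps(ϑ(p)R(p))^{k-1} and w_{n₀+2k}=ps(ϑ(p)R(p))^{k-1}ϑ(p). Consequently, u is periodic with period p·(Rϑ)(p), where (Rϑ)(p) denotes the image of p under the composition R∘ϑ. -/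

import Mathlib

/-!
Generalized pseudostandard words (de Luca–De Luca) over binary and ternary
alphabets: antimorphisms, pseudopalindromic closure, directive bi-sequences.
-/

namespace GPS

variable {A : Type*} [Inhabited A]

/-- The involutory antimorphism on finite words induced by the letter map `f`:
reverse the word and apply `f` letterwise. -/
def anti (f : A → A) (w : List A) : List A := (w.map f).reverse

/-- `w` is an `f`-palindrome (a `ϑ`-palindrome for the antimorphism induced by `f`). -/
def IsPal (f : A → A) (w : List A) : Prop := anti f w = w

/-- The `f`-palindromic closure of `w`: a shortest `f`-palindrome having `w` as a
prefix (returns `w` itself in the degenerate case where none exists). -/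
noncomputable def closure (f : A → A) (w : List A) : List A := by
  classical
  exact if h : ∃ n : ℕ, ∃ p : List A, p.length = n ∧ w <+: p ∧ IsPal f p then
    Classical.choose (Nat.find_spec h)
  else w

/-- The sequence of pseudopalindromic prefixes `w_n` of the generalized
pseudostandard word `u(Δ, Θ)`; `prefixes Δ Θ n` is the paper's `w_n`, with
`Δ n = δ_{n+1}` and `Θ n = ϑ_{n+1}` (0-based indexing of the bi-sequence). -/
noncomputable def prefixes (Δ : ℕ → A) (Θ : ℕ → A → A) : ℕ → List A
  | 0 => []
  | n + 1 => closure (Θ n) (prefixes Δ Θ n ++ [Δ n])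

/-- The generalized pseudostandard word `u(Δ, Θ)` as an infinite word `ℕ → A`. -/
noncomputable def word (Δ : ℕ → A) (Θ : ℕ → A → A) (k : ℕ) : A :=
  (prefixes Δ Θ (k + 1)).getD k default

/-- `p` is a (finite) prefix of the infinite word `x`. -/
def IsPref (p : List A) (x : ℕ → A) : Prop := ∀ i < p.length, p.getD i default = x i

/-- `w` is a factor of the infinite word `x`. -/
def IsFactor (w : List A) (x : ℕ → A) : Prop :=
  ∃ i : ℕ, ∀ j < w.length, w.getD j default = x (i + j)

/-- `w` is a left special factor of the infinite word `x`. -/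
def LeftSpecial (w : List A) (x : ℕ → A) : Prop :=
  ∃ a b : A, a ≠ b ∧ IsFactor (a :: w) x ∧ IsFactor (b :: w) x

/-- The infinite word `x` is (eventually) periodic, i.e. of the form `z v^ω`
with `v` nonempty. -/
def Periodic (x : ℕ → A) : Prop :=
  ∃ p : ℕ, 0 < p ∧ ∃ N : ℕ, ∀ n, N ≤ n → x (n + p) = x n

/-- The infinite word `x` is purely periodic with period `q`, i.e. `x = q^ω`. -/
def PurePeriod (q : List A) (x : ℕ → A) : Prop :=
  q ≠ [] ∧ ∀ i : ℕ, x i = q.getD (i % q.length) default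

/-- Concatenation of `k` copies of the finite word `l`, i.e. `l^k`. -/
def wpow (l : List A) (k : ℕ) : List A := (List.replicate k l).flatten

/-! ### The binary alphabet `{0,1}` -/

/-- Letter map of the reversal antimorphism `R` over `{0,1}`. -/
def Rb : Fin 2 → Fin 2 := id

/-- Letter map of the exchange antimorphism `E` over `{0,1}` (`0 ↔ 1`). -/
def Eb : Fin 2 → Fin 2 := fun x => x + 1

/-- A binary directive bi-sequence is normalized if the sequence `(w_n)` contains
every prefix of `u(Δ,Θ)` that is an `R`-palindrome or an `E`-palindrome. -/
def NormalizedB (Δ : ℕ → Fin 2) (Θ : ℕ → Fin 2 → Fin 2) : Prop :=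
  ∀ p : List (Fin 2), IsPref p (word Δ Θ) → (IsPal Rb p ∨ IsPal Eb p) →
    ∃ n : ℕ, prefixes Δ Θ n = p

/-! ### The ternary alphabet `{0,1,2}` -/

/-- Letter map of the reversal antimorphism `R` over `{0,1,2}`. -/
def Rt : Fin 3 → Fin 3 := id

/-- Letter map of the exchange antimorphism `E_i` over `{0,1,2}`: it fixes `i`
and exchanges the other two letters (indeed `-(i+x) = i` iff `x = i` in `Fin 3`). -/
def Et (i : Fin 3) : Fin 3 → Fin 3 := fun x => -(i + x)

/-- A ternary directive bi-sequence is normalized if the sequence `(w_n)` contains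
every prefix of `u(Δ,Θ)` that is a `ϑ`-palindrome for some involutory antimorphism `ϑ`. -/
def NormalizedT (Δ : ℕ → Fin 3) (Θ : ℕ → Fin 3 → Fin 3) : Prop :=
  ∀ p : List (Fin 3), IsPref p (word Δ Θ) → (IsPal Rt p ∨ ∃ i : Fin 3, IsPal (Et i) p) →
    ∃ n : ℕ, prefixes Δ Θ n = p

end GPS
namespace GPS

set_option linter.unusedSectionVars false

variable {A : Type*} [Inhabited A]

lemma anti_append (f : A → A) (x y : List A) :
    anti f (x ++ y) = anti f y ++ anti f x := by
  simp [anti]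

lemma anti_length (f : A → A) (x : List A) : (anti f x).length = x.length := by
  simp [anti]

lemma anti_anti' (f g : A → A) (x : List A) :
    anti g (anti f x) = List.map (fun y => g (f y)) x := by
  simp [anti, List.map_reverse, List.map_map]

lemma anti_anti {f : A → A} (hf : ∀ x, f (f x) = x) (x : List A) :
    anti f (anti f x) = x := by
  rw [anti_anti']
  simp [hf]

lemma anti_singleton (f : A → A) (c : A) : anti f [c] = [f c] := rfl

lemma isPal_nil (f : A → A) : IsPal f ([] : List A) := rfl

lemma prefix_closure (f : A → A) (w : List A) : w <+: closure f w := by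
  classical
  unfold closure
  split
  · next h => exact (Classical.choose_spec (Nat.find_spec h)).2.1
  · exact List.prefix_rfl

lemma closure_isPal {f : A → A} (hf : ∀ x, f (f x) = x) (w : List A) :
    IsPal f (closure f w) := by
  classical
  have h : ∃ n : ℕ, ∃ p : List A, p.length = n ∧ w <+: p ∧ IsPal f p := by
    refine ⟨(w ++ anti f w).length, w ++ anti f w, rfl, List.prefix_append _ _, ?_⟩
    show anti f (w ++ anti f w) = w ++ anti f w
    rw [anti_append, anti_anti hf]
  unfold closure
  rw [dif_pos h]
  exact (Classical.choose_spec (Nat.find_spec h)).2.2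

lemma closure_eq_of_longest {f : A → A} (hf : ∀ x, f (f x) = x) (u v : List A)
    (hv : IsPal f v)
    (hlong : ∀ t, t <:+ u ++ v → IsPal f t → t.length ≤ v.length) :
    closure f (u ++ v) = u ++ v ++ anti f u := by
  classical
  have hwit : IsPal f (u ++ v ++ anti f u) := by
    show anti f _ = _
    rw [List.append_assoc, anti_append, anti_append, anti_anti hf, hv, List.append_assoc]
  have h : ∃ n : ℕ, ∃ p : List A, p.length = n ∧ (u ++ v) <+: p ∧ IsPal f p :=
    ⟨(u ++ v ++ anti f u).length, u ++ v ++ anti f u, rfl,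
      ⟨anti f u, rfl⟩, hwit⟩
  unfold closure
  rw [dif_pos h]
  obtain ⟨hlen, hpre, hpal⟩ := Classical.choose_spec (Nat.find_spec h)
  set P := Classical.choose (Nat.find_spec h) with hP
  -- bounds on n := Nat.find h
  have hfind_le : Nat.find h ≤ u.length + v.length + u.length := by
    have hple : ∃ q : List A, q.length = (u ++ v ++ anti f u).length ∧
        (u ++ v) <+: q ∧ IsPal f q :=
      ⟨u ++ v ++ anti f u, rfl, ⟨anti f u, rfl⟩, hwit⟩
    refine le_trans (Nat.find_le (h := h) hple) ?_
    simp only [List.length_append, anti_length]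
    omega
  have hfind_ge : u.length + v.length ≤ Nat.find h := by
    have := hpre.length_le
    simpa [hlen] using this
  obtain ⟨z, hz⟩ := hpre
  have hzlen : z.length = Nat.find h - (u.length + v.length) := by
    have := congrArg List.length hz
    simp [hlen] at this
    omega
  set k := z.length with hk
  have hku : k ≤ u.length := by omega
  -- P = y ++ anti f (u ++ v) with |y| = k
  have hsufP : anti f (u ++ v) <:+ P := by
    rw [← hpal]
    exact ⟨anti f z, by rw [← anti_append, hz]⟩
  obtain ⟨y, hy⟩ := hsufP
  have hylen : y.length = k := by
    have h1 := congrArg List.length hy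
    have h2 := congrArg List.length hz
    simp [anti_length] at h1 h2
    omega
  -- drop k P both ways
  have hdrop1 : P.drop k = anti f (u ++ v) := by
    rw [← hy, ← hylen, List.drop_left]
  have hdrop2 : P.drop k = (u ++ v).drop k ++ z := by
    rw [← hz, List.drop_append_of_le_length]
    simp; omega
  have hkey : (u ++ v).drop k ++ z = anti f v ++ anti f u := by
    rw [← anti_append, ← hdrop1, hdrop2]
  -- the suffix (u++v).drop k is an f-palindrome
  have hpaldrop : IsPal f ((u ++ v).drop k) := by
    show anti f _ = _
    have hlen1 : ((u ++ v).drop k).length = (u ++ v).length - k := by simp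
    have htake : (anti f (u ++ v)).take ((u ++ v).length - k) = (u ++ v).drop k := by
      rw [← hdrop1, hdrop2, List.take_append_of_le_length (by simp),
        List.take_of_length_le (by simp)]
    have : anti f ((u ++ v).drop k) = (anti f (u ++ v)).take ((u ++ v).length - k) := by
      unfold anti
      rw [List.map_drop, List.reverse_drop]
      simp
    rw [this, htake]
  have hle : ((u ++ v).drop k).length ≤ v.length :=
    hlong _ (List.drop_suffix _ _) hpaldrop
  have hkeq : k = u.length := by
    simp at hle
    omega
  -- conclude
  have hdropv : (u ++ v).drop k = v := by rw [hkeq, List.drop_left]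
  have hz' : z = anti f u := by
    have := hkey
    rw [hdropv, hv] at this
    exact List.append_cancel_left this
  rw [← hz, hz', List.append_assoc]

lemma step_lemma (f g : A → A)
    (hf : ∀ x, f (f x) = x) (hg : ∀ x, g (g x) = x)
    (hcomm : ∀ x, f (g x) = g (f x))
    (a : A) (q s : List A)
    (hS : anti f s = s)
    (hU : anti g (q ++ [a] ++ s) = q ++ [a] ++ s)
    (hfg : anti g s = List.map (fun x => f (g x)) s)
    (hlong : ∀ t, t <:+ q ++ [a] ++ s ++ [f a] → IsPal f t → t.length ≤ s.length + 2) :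
    closure f (q ++ [a] ++ s ++ [f a]) = q ++ [a] ++ (s ++ anti f (q ++ [a])) ∧
    anti g (s ++ anti f (q ++ [a])) = s ++ anti f (q ++ [a]) ∧
    anti f (q ++ [a] ++ (s ++ anti f (q ++ [a]))) = q ++ [a] ++ (s ++ anti f (q ++ [a])) ∧
    anti f (s ++ anti f (q ++ [a])) =
      List.map (fun x => g (f x)) (s ++ anti f (q ++ [a])) ∧
    (∀ t, t <:+ q ++ [a] ++ (s ++ anti f (q ++ [a])) ++ [g a] → IsPal g t →
      t.length ≤ (s ++ anti f (q ++ [a])).length + 2) := by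
  set p : List A := q ++ [a] with hp
  have hantip : anti f p = [f a] ++ anti f q := by
    rw [hp, anti_append, anti_singleton]
  set v : List A := [a] ++ s ++ [f a] with hv
  have hvpal : IsPal f v := by
    show anti f _ = _
    rw [hv, anti_append, anti_append, anti_singleton, anti_singleton, hS, hf]
    simp
  have hvlen : v.length = s.length + 2 := by simp [hv]
  -- the word before closure
  have hw : q ++ [a] ++ s ++ [f a] = q ++ v := by simp [hv]
  -- Part 1 : closure computation
  have part1 : closure f (q ++ [a] ++ s ++ [f a]) = q ++ [a] ++ (s ++ anti f p) := by
    rw [hw, closure_eq_of_longest hf q v hvpal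
      (fun t ht hpt => by rw [hvlen]; exact hlong t (by rwa [hw]) hpt)]
    rw [hantip, hv]
    simp
  -- abbreviation for new s
  set s' : List A := s ++ anti f p with hs'
  -- fact: from hU, anti g s ++ anti g p = p ++ s
  have hU' : anti g s ++ anti g p = p ++ s := by
    rw [← anti_append]
    exact hU
  -- fact E1 : map (f∘g) p ++ map (f∘g) s = s ++ anti f p
  have hE1 : List.map (fun x => f (g x)) p ++ List.map (fun x => f (g x)) s
      = s ++ anti f p := by
    have h1 := congrArg (anti f) hU'
    rw [anti_append, anti_anti', anti_anti', anti_append, hS] at h1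
    exact h1
  have hmapcomm : ∀ (l : List A),
      List.map (fun x => g (f x)) l = List.map (fun x => f (g x)) l := by
    intro l
    exact List.map_congr_left (fun x _ => (hcomm x).symm)
  -- Part 2 : anti g s' = s'
  have part2 : anti g s' = s' := by
    rw [hs', anti_append, anti_anti', hmapcomm, hfg, hE1]
  -- Part 3 : anti f (p ++ s') = p ++ s'
  have part3 : anti f (p ++ s') = p ++ s' := by
    have : p ++ s' = q ++ v ++ anti f q := by rw [hs', hantip, hv, hp]; simp
    rw [this, List.append_assoc, anti_append, anti_append, anti_anti hf, hvpal]
    simp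
  -- Part 4 : anti f s' = map (g∘f) s'
  have part4 : anti f s' = List.map (fun x => g (f x)) s' := by
    rw [hs', anti_append, anti_anti hf, hS, List.map_append, hmapcomm s, ← hfg]
    have : List.map (fun x => g (f x)) (anti f p) = anti g p := by
      unfold anti
      rw [List.map_reverse, List.map_map]
      congr 1
      apply List.map_congr_left
      intro x _
      show g (f (f x)) = g x
      rw [hf]
    rw [this, hU']
  -- Part 5 : longest g-palindromic suffix property
  have part5 : ∀ t, t <:+ q ++ [a] ++ s' ++ [g a] → IsPal g t →
      t.length ≤ s'.length + 2 := by
    intro t ht hpt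
    by_contra hcon
    push_neg at hcon
    set v' : List A := [a] ++ s' ++ [g a] with hv'
    have hv'pal : IsPal g v' := by
      show anti g _ = _
      rw [hv', anti_append, anti_append, anti_singleton, anti_singleton, part2, hg]
      simp
    have hv'len : v'.length = s'.length + 2 := by simp [hv']
    have hw' : q ++ [a] ++ s' ++ [g a] = q ++ v' := by simp [hv']
    rw [hw'] at ht
    obtain ⟨r, hr⟩ := ht
    have hrlen : r.length + t.length = q.length + v'.length := by
      have := congrArg List.length hr
      simpa using this
    have hrq : r.length ≤ q.length := by omega
    -- t = x ++ v' with x a nonempty suffix of q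
    set x : List A := q.drop r.length with hx
    have hxlen : x.length = q.length - r.length := by simp [hx]
    have htx : t = x ++ v' := by
      have h1 : (r ++ t).drop r.length = t := List.drop_left
      have h2 : (q ++ v').drop r.length = x ++ v' := by
        rw [List.drop_append_of_le_length hrq, hx]
      rw [← h1, hr, h2]
    have hxne : 1 ≤ x.length := by
      rw [hxlen]
      omega
    -- star : x ++ v' = v' ++ anti g x
    have hstar : x ++ v' = v' ++ anti g x := by
      have h1 : anti g t = t := hpt
      rw [htx, anti_append, hv'pal] at h1
      exact h1.symm
    -- decompose v' = v ++ (anti f q ++ [g a])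
    have hv'decomp : v' = v ++ (anti f q ++ [g a]) := by
      rw [hv', hv, hs', hantip]
      simp
    -- take (x.length + v.length) of both sides of hstar
    have htake := congrArg (List.take (x.length + v.length)) hstar
    have hlhs : (x ++ v').take (x.length + v.length) = x ++ v := by
      rw [List.take_length_add_append, hv'decomp, List.take_append_of_le_length (le_refl _),
        List.take_length]
    have hqlen : x.length ≤ q.length := by omega
    have hrhs : (v' ++ anti g x).take (x.length + v.length) = v ++ anti f x := by
      have hlen1 : x.length + v.length ≤ v'.length := by
        have hap : (anti f p).length = q.length + 1 := by
          rw [anti_length, hp]; simp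
        rw [hv'len, hvlen, hs', List.length_append, hap]
        omega
      rw [List.take_append_of_le_length hlen1, hv'decomp, Nat.add_comm,
        List.take_length_add_append]
      congr 1
      have hxq : x.length ≤ (anti f q).length := by rw [anti_length]; omega
      rw [List.take_append_of_le_length hxq]
      -- take x.length (anti f q) = anti f x
      unfold anti
      have hidx : (List.map f q).length - x.length = r.length := by
        rw [List.length_map]; omega
      rw [List.take_reverse, hidx, ← List.map_drop, hx]
    rw [hlhs, hrhs] at htake
    -- T := x ++ v is an f-palindromic suffix of the original word, too long
    have hTpal : IsPal f (x ++ v) := by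
      show anti f _ = _
      rw [anti_append, hvpal, htake]
    have hTsuf : x ++ v <:+ q ++ [a] ++ s ++ [f a] := by
      rw [hw]
      exact ⟨q.take r.length, by rw [← List.append_assoc, hx, List.take_append_drop]⟩
    have := hlong _ hTsuf hTpal
    rw [List.length_append, hvlen] at this
    omega
  exact ⟨part1, part2, part3, part4, part5⟩

lemma prefixes_succ (Δ : ℕ → A) (Θ : ℕ → A → A) (n : ℕ) :
    prefixes Δ Θ (n + 1) = closure (Θ n) (prefixes Δ Θ n ++ [Δ n]) := rfl

lemma prefixes_prefix_succ (Δ : ℕ → A) (Θ : ℕ → A → A) (n : ℕ) :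
    prefixes Δ Θ n ++ [Δ n] <+: prefixes Δ Θ (n + 1) := by
  rw [prefixes_succ]
  exact prefix_closure _ _

lemma prefixes_prefix_le (Δ : ℕ → A) (Θ : ℕ → A → A) {n₁ n₂ : ℕ} (h : n₁ ≤ n₂) :
    prefixes Δ Θ n₁ <+: prefixes Δ Θ n₂ := by
  induction n₂ with
  | zero => simp at h; subst h; exact List.prefix_rfl
  | succ n ih =>
    rcases Nat.lt_or_ge n₁ (n + 1) with h' | h'
    · exact (ih (by omega)).trans
        (((List.prefix_append _ [Δ n]).trans (prefixes_prefix_succ Δ Θ n)))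
    · have : n₁ = n + 1 := by omega
      subst this
      exact List.prefix_rfl

lemma length_prefixes_ge (Δ : ℕ → A) (Θ : ℕ → A → A) (n : ℕ) :
    n ≤ (prefixes Δ Θ n).length := by
  induction n with
  | zero => simp
  | succ n ih =>
    have h := (prefixes_prefix_succ Δ Θ n).length_le
    simp at h
    omega

lemma word_eq_getD (Δ : ℕ → A) (Θ : ℕ → A → A) (n N : ℕ) (h : n < N) :
    word Δ Θ n = (prefixes Δ Θ N).getD n default := by
  unfold word
  obtain ⟨t, ht⟩ := prefixes_prefix_le Δ Θ (show n + 1 ≤ N from h)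
  rw [← ht, List.getD_append]
  exact lt_of_lt_of_le (Nat.lt_succ_self n) (length_prefixes_ge Δ Θ (n + 1))

lemma wpow_succ (l : List A) (k : ℕ) : wpow l (k + 1) = l ++ wpow l k := by
  simp [wpow, List.replicate_succ]

lemma wpow_zero (l : List A) : wpow l 0 = [] := rfl

lemma wpow_succ' (l : List A) (k : ℕ) : wpow l (k + 1) = wpow l k ++ l := by
  induction k with
  | zero => simp [wpow_succ, wpow_zero]
  | succ k ih => rw [wpow_succ l (k+1), ih, ← List.append_assoc, ← wpow_succ, ih, List.append_assoc]

lemma wpow_length (l : List A) (k : ℕ) : (wpow l k).length = k * l.length := by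
  induction k with
  | zero => simp [wpow_zero]
  | succ k ih => rw [wpow_succ]; simp [ih]; ring

lemma wpow_getD (l : List A) (k n : ℕ) (h : n < k * l.length) :
    (wpow l k).getD n default = l.getD (n % l.length) default := by
  induction k generalizing n with
  | zero => rw [Nat.zero_mul] at h; omega
  | succ k ih =>
    rw [Nat.succ_mul] at h
    rw [wpow_succ]
    rcases Nat.lt_or_ge n l.length with h' | h'
    · rw [List.getD_append _ _ _ _ h', Nat.mod_eq_of_lt h']
    · rw [List.getD_append_right _ _ _ _ h', ih _ (by omega), Nat.mod_eq_sub_mod h']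
/-- for a ternary bi-sequence of the form `(v(ab)^ω, σ(Rϑ)^ω)` with
`|v| = |σ| = m`, `ϑ = E_i`, `ϑ(a) = b`, writing `w_{m+1} = ps` where `asb` is the
longest `ϑ`-palindromic suffix of `w_{m+1}b`, one has for every `k ≥ 1` (here
shifted, `k ↦ k+1`): `w_{m+2k-1} = ps(ϑ(p)R(p))^{k-1}` and
`w_{m+2k} = ps(ϑ(p)R(p))^{k-1}ϑ(p)`; consequently `u` is periodic with period
`p·(Rϑ)(p)`. -/
theorem periodic_shape_ternary_two_antimorphisms (Δ : ℕ → Fin 3) (Θ : ℕ → Fin 3 → Fin 3)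
    (hΘ : ∀ n, Θ n = Rt ∨ ∃ i' : Fin 3, Θ n = Et i')
    (i : Fin 3) (a b : Fin 3) (hab : Et i a = b) (m : ℕ)
    (hpat : ∀ l : ℕ, Δ (m + 2*l) = a ∧ Δ (m + 2*l + 1) = b ∧
      Θ (m + 2*l) = Rt ∧ Θ (m + 2*l + 1) = Et i)
    (p s : List (Fin 3))
    (hps : prefixes Δ Θ (m + 1) = p ++ s)
    (hsuf : (a :: (s ++ [b])) <:+ (prefixes Δ Θ (m + 1) ++ [b]))
    (hpal : IsPal (Et i) (a :: (s ++ [b])))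
    (hlongest : ∀ t : List (Fin 3), t <:+ (prefixes Δ Θ (m + 1) ++ [b]) →
      IsPal (Et i) t → t.length ≤ (a :: (s ++ [b])).length) :
    (∀ k : ℕ,
      prefixes Δ Θ (m + 2*k + 1) = p ++ s ++ wpow (anti (Et i) p ++ anti Rt p) k ∧
      prefixes Δ Θ (m + 2*k + 2) =
        p ++ s ++ wpow (anti (Et i) p ++ anti Rt p) k ++ anti (Et i) p) ∧
    PurePeriod (p ++ anti Rt (anti (Et i) p)) (word Δ Θ) := by
  classical
  have hfE : ∀ x : Fin 3, Et i (Et i x) = x := by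
    intro x
    show -(i + -(i + x)) = x
    rw [neg_add, neg_neg, neg_add_cancel_left]
  have hgR : ∀ x : Fin 3, Rt (Rt x) = x := fun _ => rfl
  have hcomm1 : ∀ x : Fin 3, Et i (Rt x) = Rt (Et i x) := fun _ => rfl
  have hcomm2 : ∀ x : Fin 3, Rt (Et i x) = Et i (Rt x) := fun _ => rfl
  have hba : Et i b = a := by rw [← hab, hfE]
  -- extract z with p = z ++ [a]
  obtain ⟨z, hz⟩ := hsuf
  rw [hps] at hz
  have hpz : p = z ++ [a] := by
    have h1 : (z ++ [a]) ++ (s ++ [b]) = p ++ (s ++ [b]) := by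
      simpa [List.append_assoc] using hz
    exact (List.append_cancel_right h1).symm
  -- base invariants
  have hS0 : anti (Et i) s = s := by
    have h2 : anti (Et i) ([a] ++ s ++ [b]) = [a] ++ anti (Et i) s ++ [b] := by
      rw [anti_append, anti_append, anti_singleton, anti_singleton, hba, hab]
      simp
    have h4 : anti (Et i) ([a] ++ s ++ [b]) = [a] ++ s ++ [b] := by
      have h3 : ([a] ++ s ++ [b] : List (Fin 3)) = a :: (s ++ [b]) := by simp
      rw [h3]; exact hpal
    rw [h2] at h4
    simpa using h4
  have hU0 : anti Rt (z ++ [a] ++ s) = z ++ [a] ++ s := by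
    have hΘm := (hpat 0).2.2.1
    norm_num at hΘm
    have h5 : IsPal Rt (prefixes Δ Θ (m+1)) := by
      rw [prefixes_succ, hΘm]
      exact closure_isPal hgR _
    rw [hps, hpz] at h5
    exact h5
  have hfg0 : anti Rt s = List.map (fun x => Et i (Rt x)) s := by
    have h5 : List.map (Et i) s = s.reverse := by
      have h6 := congrArg List.reverse hS0
      rwa [anti, List.reverse_reverse] at h6
    show (List.map Rt s).reverse = _
    rw [show Rt = id from rfl, List.map_id]
    exact h5.symm
  have hlong0 : ∀ t, t <:+ z ++ [a] ++ s ++ [Et i a] → IsPal (Et i) t →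
      t.length ≤ s.length + 2 := by
    intro t ht hpt
    rw [hab] at ht
    have h7 := hlongest t (by rw [hps, hpz]; simpa [List.append_assoc] using ht) hpt
    simpa using h7
  -- the invariant
  set Zc : List (Fin 3) := anti (Et i) p ++ anti Rt p with hZc
  set S : ℕ → List (Fin 3) := fun k => s ++ wpow Zc k with hSdef
  have hS0eq : S 0 = s := by simp [hSdef, wpow_zero]
  have hSsucc : ∀ k, S (k+1) = S k ++ anti (Et i) (z ++ [a]) ++ anti Rt (z ++ [a]) := by
    intro k
    rw [hSdef]
    simp only []
    rw [wpow_succ', hZc, hpz]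
    simp [List.append_assoc]
  set Inv : ℕ → Prop := fun k =>
    prefixes Δ Θ (m + 2*k + 1) = z ++ [a] ++ S k ∧
    anti (Et i) (S k) = S k ∧
    anti Rt (z ++ [a] ++ S k) = z ++ [a] ++ S k ∧
    anti Rt (S k) = List.map (fun x => Et i (Rt x)) (S k) ∧
    (∀ t, t <:+ z ++ [a] ++ S k ++ [Et i a] → IsPal (Et i) t →
      t.length ≤ (S k).length + 2) with hInvDef
  -- the first half-step
  have app1 : ∀ k, Inv k →
      prefixes Δ Θ (m + 2*k + 2) = z ++ [a] ++ (S k ++ anti (Et i) (z ++ [a])) ∧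
      anti Rt (S k ++ anti (Et i) (z ++ [a])) = S k ++ anti (Et i) (z ++ [a]) ∧
      anti (Et i) (z ++ [a] ++ (S k ++ anti (Et i) (z ++ [a]))) =
        z ++ [a] ++ (S k ++ anti (Et i) (z ++ [a])) ∧
      anti (Et i) (S k ++ anti (Et i) (z ++ [a])) =
        List.map (fun x => Rt (Et i x)) (S k ++ anti (Et i) (z ++ [a])) ∧
      (∀ t, t <:+ z ++ [a] ++ (S k ++ anti (Et i) (z ++ [a])) ++ [Rt a] →
        IsPal Rt t → t.length ≤ (S k ++ anti (Et i) (z ++ [a])).length + 2) := by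
    intro k hInv
    obtain ⟨i1, i2, i3, i4, i5⟩ := hInv
    obtain ⟨c1, c2, c3, c4, c5⟩ :=
      step_lemma (Et i) Rt hfE hgR hcomm1 a z (S k) i2 i3 i4 i5
    refine ⟨?_, c2, c3, c4, c5⟩
    have hpre : prefixes Δ Θ (m + 2*k + 2) =
        closure (Θ (m + 2*k + 1)) (prefixes Δ Θ (m + 2*k + 1) ++ [Δ (m + 2*k + 1)]) :=
      prefixes_succ Δ Θ (m + 2*k + 1)
    rw [hpre, (hpat k).2.1, (hpat k).2.2.2, i1, ← hab]
    exact c1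
  -- the second half-step
  have app2 : ∀ k, Inv k → Inv (k + 1) := by
    intro k hInv
    obtain ⟨a1, a2, a3, a4, a5⟩ := app1 k hInv
    obtain ⟨c1, c2, c3, c4, c5⟩ :=
      step_lemma Rt (Et i) hgR hfE hcomm2 a z (S k ++ anti (Et i) (z ++ [a])) a2 a3 a4 a5
    have hS1 : S (k+1) = S k ++ anti (Et i) (z ++ [a]) ++ anti Rt (z ++ [a]) := hSsucc k
    simp only [hInvDef]
    have e1 : prefixes Δ Θ (m + 2*(k+1) + 1) = z ++ [a] ++ S (k+1) := by
      have hidx : m + 2*(k+1) + 1 = (m + 2*k + 2) + 1 := by ring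
      have hidx2 : m + 2*(k+1) = m + 2*k + 2 := by ring
      have hΔ := (hpat (k+1)).1
      have hΘ2 := (hpat (k+1)).2.2.1
      rw [hidx2] at hΔ hΘ2
      rw [hidx, prefixes_succ, hΔ, hΘ2, a1, hS1]
      exact c1
    refine ⟨e1, ?_, ?_, ?_, ?_⟩
    · rw [hS1]; exact c2
    · rw [hS1]; exact c3
    · rw [hS1]; exact c4
    · rw [hS1]; exact c5
  have inv0 : Inv 0 := by
    simp only [hInvDef]
    rw [hS0eq]
    refine ⟨?_, hS0, hU0, hfg0, hlong0⟩
    have : m + 2*0 + 1 = m + 1 := by ring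
    rw [this, hps, hpz]
  have key : ∀ k, Inv k := by
    intro k
    induction k with
    | zero => exact inv0
    | succ k ih => exact app2 k ih
  constructor
  · intro k
    obtain ⟨i1, _, _, _, _⟩ := key k
    obtain ⟨a1, _, _, _, _⟩ := app1 k (key k)
    constructor
    · rw [i1, hpz, hSdef]
      simp [List.append_assoc]
    · rw [a1, hpz, hSdef]
      simp [List.append_assoc]
  · -- periodicity
    set Q : List (Fin 3) := p ++ anti Rt (anti (Et i) p) with hQ
    have hQne : Q ≠ [] := by
      rw [hQ, hpz]
      simp
    have hQpos : 0 < Q.length := List.length_pos_iff.2 hQne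
    -- key identity
    have wker : ∀ k, z ++ [a] ++ S (k+1) = Q ++ (z ++ [a] ++ S k) := by
      intro k
      obtain ⟨_, _, i3, _, _⟩ := key k
      obtain ⟨_, a2, _, _, _⟩ := app1 k (key k)
      have h8 : anti Rt (z ++ [a] ++ S k) = anti Rt (S k) ++ anti Rt (z ++ [a]) :=
        anti_append _ _ _
      have h9 : anti Rt (S k ++ anti (Et i) (z ++ [a])) =
          anti Rt (anti (Et i) (z ++ [a])) ++ anti Rt (S k) := anti_append _ _ _
      rw [hSsucc k, hQ, hpz]
      calc (z ++ [a]) ++ (S k ++ anti (Et i) (z ++ [a]) ++ anti Rt (z ++ [a]))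
          = (z ++ [a]) ++ (anti Rt (S k ++ anti (Et i) (z ++ [a])) ++ anti Rt (z ++ [a])) := by
            rw [a2]
        _ = (z ++ [a]) ++ (anti Rt (anti (Et i) (z ++ [a])) ++
              (anti Rt (S k) ++ anti Rt (z ++ [a]))) := by
            rw [h9]; simp [List.append_assoc]
        _ = (z ++ [a]) ++ (anti Rt (anti (Et i) (z ++ [a])) ++
              anti Rt (z ++ [a] ++ S k)) := by rw [h8]
        _ = (z ++ [a]) ++ (anti Rt (anti (Et i) (z ++ [a])) ++ (z ++ [a] ++ S k)) := by
            rw [i3]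
        _ = (z ++ [a] ++ anti Rt (anti (Et i) (z ++ [a]))) ++ (z ++ [a] ++ S k) := by
            simp [List.append_assoc]
    have wform : ∀ k, z ++ [a] ++ S k = wpow Q k ++ (z ++ [a] ++ S 0) := by
      intro k
      induction k with
      | zero => rw [wpow_zero]; simp
      | succ k ih =>
        rw [wker k, ih, wpow_succ]
        simp [List.append_assoc]
    refine ⟨hQne, ?_⟩
    intro n
    have hnK : n < (n + 1) * Q.length := by
      calc n < n + 1 := Nat.lt_succ_self n
        _ = (n + 1) * 1 := by ring
        _ ≤ (n + 1) * Q.length := Nat.mul_le_mul_left _ hQpos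
    have h10 := word_eq_getD Δ Θ n (m + 2*(n+1) + 1) (by omega)
    obtain ⟨i1, _, _, _, _⟩ := key (n + 1)
    rw [h10, i1, wform (n + 1), List.getD_append _ _ _ _ (by rw [wpow_length]; exact hnK),
      wpow_getD Q (n+1) n hnK]

end GPS
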